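/- Let A ∈ R^{n×s} and let M_x, M_ξ be symmetric positive definite. Among all matrices of the form U Σ Yᵀ with U ∈ R^{n×r} M_x-orthonormal, Y ∈ R^{s×r} M_ξ-orthonormal, and Σ ∈ R^{r×r}, the minimum of the weighted Frobenius error ‖A - U Σ Yᵀ‖²_{M_x,M_ξ} equals the sum of squares of the singular values of L_xᵀ A L_ξ beyond the r-th, where M_x = L_x L_xᵀ and M_ξ = L_ξ L_ξᵀ are Cholesky factorizations (the weighted Eckart–Young theorem underlying the optimality of the KL decomposition). -/

import Mathlib

open Matrix

lemma fr_nonneg {m k : ℕ} (M : Matrix (Fin m) (Fin k) ℝ) : 0 ≤ trace (Mᵀ * M) := by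
  rw [Matrix.trace]
  refine Finset.sum_nonneg fun j _ => ?_
  simp only [Matrix.diag_apply, Matrix.mul_apply, Matrix.transpose_apply]
  exact Finset.sum_nonneg fun i _ => mul_self_nonneg _

lemma sorted_sum_le {s r : ℕ} (hr : r < s) (lam c : Fin s → ℝ) (hlam : Antitone lam)
    (hc0 : ∀ i, 0 ≤ c i) (hc1 : ∀ i, c i ≤ 1) (hcs : ∑ i, c i = r) :
    ∑ i, lam i * c i ≤ ∑ i ∈ Finset.univ.filter (fun i : Fin s => (i : ℕ) < r), lam i := by
  set p := lam ⟨r, hr⟩ with hp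
  have key : ∑ i, (lam i * c i - (if (i : ℕ) < r then lam i else 0)) ≤
      ∑ i, (p * c i - (if (i : ℕ) < r then p else 0)) := by
    refine Finset.sum_le_sum fun i _ => ?_
    by_cases h : (i : ℕ) < r
    · simp only [h, if_pos]
      have h1 : p ≤ lam i := hlam (by simpa [Fin.le_def] using h.le)
      nlinarith [hc1 i]
    · simp only [h, if_neg, not_false_iff, sub_zero]
      have h1 : lam i ≤ p := hlam (by simpa [Fin.le_def] using not_lt.mp h)
      nlinarith [hc0 i]
  have hcard : ((Finset.univ.filter (fun i : Fin s => (i : ℕ) < r)).card : ℝ) = r := by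
    norm_cast
    rw [Finset.card_filter, Fin.sum_univ_eq_sum_range (fun i => if i < r then 1 else 0),
      ← Finset.card_filter]
    rw [show Finset.filter (fun i => i < r) (Finset.range s) = Finset.range r from by
      ext x; simp only [Finset.mem_filter, Finset.mem_range]; omega, Finset.card_range]
  rw [Finset.sum_sub_distrib, Finset.sum_sub_distrib, ← Finset.sum_filter, ← Finset.sum_filter,
    Finset.sum_const, nsmul_eq_mul, ← Finset.mul_sum, hcs] at key
  rw [hcard] at key
  linarith

lemma exists_Q {n r : ℕ} (hrn : r ≤ n) (C : Matrix (Fin n) (Fin r) ℝ) :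
    ∃ Q : Matrix (Fin n) (Fin r) ℝ, Qᵀ * Q = 1 ∧ Q * (Qᵀ * C) = C := by
  have hH : (C * Cᵀ).IsHermitian := by
    have := Matrix.isHermitian_mul_conjTranspose_self C
    rwa [Matrix.conjTranspose_eq_transpose_of_trivial] at this
  set μ := hH.eigenvalues with hμ
  set P : Matrix (Fin n) (Fin n) ℝ := (Matrix.IsHermitian.eigenvectorUnitary hH : Matrix (Fin n) (Fin n) ℝ) with hP
  have hPP : Pᵀ * P = 1 := by
    have := (Matrix.mem_unitaryGroup_iff').mp (Matrix.IsHermitian.eigenvectorUnitary hH).2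
    rwa [Matrix.star_eq_conjTranspose, Matrix.conjTranspose_eq_transpose_of_trivial] at this
  have hPP' : P * Pᵀ = 1 := by
    have := (Matrix.mem_unitaryGroup_iff).mp (Matrix.IsHermitian.eigenvectorUnitary hH).2
    rwa [Matrix.star_eq_conjTranspose, Matrix.conjTranspose_eq_transpose_of_trivial] at this
  have hspec : C * Cᵀ = P * Matrix.diagonal μ * Pᵀ := by
    have := hH.spectral_theorem
    rwa [Unitary.conjStarAlgAut_apply, Matrix.star_eq_conjTranspose, Matrix.conjTranspose_eq_transpose_of_trivial,
      show (RCLike.ofReal ∘ μ : Fin n → ℝ) = μ from funext fun i => rfl] at this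
  -- the set of nonzero eigenvalues has card = rank C ≤ r
  classical
  set T : Finset (Fin n) := Finset.univ.filter (fun i => μ i ≠ 0) with hT
  have hcardT : T.card ≤ r := by
    have h1 : (C * Cᵀ).rank = Fintype.card {i // μ i ≠ 0} := hH.rank_eq_card_non_zero_eigs
    have h2 : (C * Cᵀ).rank = C.rank := Matrix.rank_self_mul_transpose C
    have h3 : C.rank ≤ r := by
      have := Matrix.rank_le_card_width C
      simpa using this
    have h4 : Fintype.card {i // μ i ≠ 0} = T.card := by
      rw [hT, Fintype.card_subtype]
    omega
  obtain ⟨T', hTT', hcardT'⟩ := Finset.exists_superset_card_eq hcardT (by simpa using hrn)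
  have ee : Fin r ≃ {x // x ∈ T'} :=
    (finCongr (by rw [← hcardT', Fintype.card_coe])).trans (Fintype.equivFin {x // x ∈ T'}).symm
  set h : Fin r → Fin n := fun j => (ee j : Fin n) with hh
  have hinj : Function.Injective h := fun a b hab => ee.injective (Subtype.ext hab)
  set Q : Matrix (Fin n) (Fin r) ℝ := P.submatrix id h with hQ
  have sum_reindex : ∀ f : Fin n → ℝ, ∑ j : Fin r, f (h j) = ∑ i ∈ T', f i := by
    intro f
    rw [← Finset.sum_coe_sort T' f]
    exact Fintype.sum_equiv ee _ _ (fun j => rfl)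
  refine ⟨Q, ?_, ?_⟩
  · ext j j'
    have : (Qᵀ * Q) j j' = (Pᵀ * P) (h j) (h j') := by
      simp [hQ, Matrix.mul_apply]
    rw [this, hPP]
    by_cases hjj : j = j'
    · subst hjj; simp [Matrix.one_apply]
    · have : h j ≠ h j' := fun hc => hjj (hinj hc)
      simp [Matrix.one_apply, hjj, this]
  · -- Q * Qᵀ = P * S * Pᵀ with S the indicator diagonal of T'
    set S : Matrix (Fin n) (Fin n) ℝ := Matrix.diagonal (fun i => if i ∈ T' then (1:ℝ) else 0) with hS
    have hQQ : Q * Qᵀ = P * S * Pᵀ := by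
      ext a b
      have lhs : (Q * Qᵀ) a b = ∑ j : Fin r, P a (h j) * P b (h j) := by
        simp [hQ, Matrix.mul_apply]
      have rhs : (P * S * Pᵀ) a b = ∑ i ∈ T', P a i * P b i := by
        rw [Matrix.mul_assoc, Matrix.mul_apply]
        rw [← Finset.sum_filter_add_sum_filter_not Finset.univ (· ∈ T')]
        have hz : ∑ i ∈ Finset.univ.filter (· ∉ T'), P a i * (S * Pᵀ) i b = 0 := by
          refine Finset.sum_eq_zero fun i hi => ?_
          simp only [Finset.mem_filter] at hi
          simp [hS, Matrix.mul_apply, Matrix.diagonal, hi.2]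
        rw [hz, add_zero]
        rw [show Finset.univ.filter (· ∈ T') = T' from by ext x; simp]
        refine Finset.sum_congr rfl fun i hi => ?_
        simp [hS, Matrix.mul_apply, Matrix.diagonal_apply, hi]
      rw [lhs, rhs]
      exact sum_reindex (fun i => P a i * P b i)
    -- rows of Pᵀ*C with zero eigenvalue vanish
    have hrow : ∀ i, μ i = 0 → ∀ j, (Pᵀ * C) i j = 0 := by
      intro i hi j
      have hdiag : (Pᵀ * C * (Pᵀ * C)ᵀ) i i = μ i := by
        have : Pᵀ * C * (Pᵀ * C)ᵀ = Matrix.diagonal μ := by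
          rw [Matrix.transpose_mul, Matrix.transpose_transpose, show Pᵀ * C * (Cᵀ * P) = Pᵀ * (C * Cᵀ) * P from by simp [Matrix.mul_assoc],
            hspec]
          calc Pᵀ * (P * Matrix.diagonal μ * Pᵀ) * P
              = (Pᵀ * P) * Matrix.diagonal μ * (Pᵀ * P) := by simp [Matrix.mul_assoc]
            _ = Matrix.diagonal μ := by rw [hPP, Matrix.one_mul, Matrix.mul_one]
        rw [this, Matrix.diagonal_apply_eq]
      have hsum : ∑ j, ((Pᵀ * C) i j)^2 = 0 := by
        have : (Pᵀ * C * (Pᵀ * C)ᵀ) i i = ∑ j, ((Pᵀ * C) i j)^2 := by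
          rw [Matrix.mul_apply]
          exact Finset.sum_congr rfl fun j _ => by rw [Matrix.transpose_apply, pow_two]
        rw [← this, hdiag, hi]
      have := (Finset.sum_eq_zero_iff_of_nonneg (fun j _ => sq_nonneg ((Pᵀ * C) i j))).mp hsum j (Finset.mem_univ j)
      exact pow_eq_zero_iff (two_ne_zero) |>.mp this
    have hSPC : S * (Pᵀ * C) = Pᵀ * C := by
      ext i j
      rw [Matrix.mul_apply]
      by_cases hiT : i ∈ T'
      · simp [hS, Matrix.diagonal_apply, Finset.sum_ite_eq, hiT]
      · have hμi : μ i = 0 := by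
          by_contra hne
          exact hiT (hTT' (by simp [hT, hne]))
        simp [hS, Matrix.diagonal_apply, Finset.sum_ite_eq, hiT, hrow i hμi j]
    calc Q * (Qᵀ * C) = (Q * Qᵀ) * C := by rw [Matrix.mul_assoc]
      _ = P * (S * (Pᵀ * C)) := by rw [hQQ]; simp [Matrix.mul_assoc]
      _ = P * (Pᵀ * C) := by rw [hSPC]
      _ = C := by rw [← Matrix.mul_assoc, hPP', Matrix.one_mul]

lemma submatrix_orth {n r : ℕ} (P : Matrix (Fin n) (Fin n) ℝ) (hPP : Pᵀ * P = 1)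
    (h : Fin r → Fin n) (hinj : Function.Injective h) :
    (P.submatrix id h)ᵀ * (P.submatrix id h) = 1 := by
  ext j j'
  have : ((P.submatrix id h)ᵀ * (P.submatrix id h)) j j' = (Pᵀ * P) (h j) (h j') := by
    simp [Matrix.mul_apply]
  rw [this, hPP]
  by_cases hjj : j = j'
  · subst hjj; simp [Matrix.one_apply]
  · have : h j ≠ h j' := fun hc => hjj (hinj hc)
    simp [Matrix.one_apply, hjj, this]

lemma err_identity {n s r : ℕ} (B : Matrix (Fin n) (Fin s) ℝ)
    (U : Matrix (Fin n) (Fin r) ℝ) (Sig : Matrix (Fin r) (Fin r) ℝ)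
    (Y : Matrix (Fin s) (Fin r) ℝ) (hU : Uᵀ * U = 1) (hY : Yᵀ * Y = 1) :
    trace ((B - U * Sig * Yᵀ)ᵀ * (B - U * Sig * Yᵀ)) =
      trace (Bᵀ * B) - trace ((Uᵀ * B * Y)ᵀ * (Uᵀ * B * Y))
        + trace ((Sig - Uᵀ * B * Y)ᵀ * (Sig - Uᵀ * B * Y)) := by
  set X := U * Sig * Yᵀ with hX
  set M := Uᵀ * B * Y with hM
  have e1 : trace (Bᵀ * X) = trace (Mᵀ * Sig) := by
    rw [hX, ← Matrix.mul_assoc, Matrix.trace_mul_comm (Bᵀ * (U * Sig)) Yᵀ]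
    congr 1
    rw [hM]
    simp [Matrix.transpose_mul, Matrix.mul_assoc]
  have e2 : trace (Xᵀ * B) = trace (Mᵀ * Sig) := by
    rw [← e1, ← Matrix.trace_transpose (Xᵀ * B), Matrix.transpose_mul, Matrix.transpose_transpose]
  have e3 : trace (Xᵀ * X) = trace (Sigᵀ * Sig) := by
    rw [hX]
    have : (U * Sig * Yᵀ)ᵀ * (U * Sig * Yᵀ) = Y * (Sigᵀ * Sig * Yᵀ) := by
      simp only [Matrix.transpose_mul, Matrix.transpose_transpose, Matrix.mul_assoc]
      rw [← Matrix.mul_assoc Uᵀ U (Sig * Yᵀ), hU, Matrix.one_mul]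
    rw [this, Matrix.trace_mul_comm, Matrix.mul_assoc, hY, Matrix.mul_one]
  have e4 : trace (Sigᵀ * M) = trace (Mᵀ * Sig) := by
    rw [← Matrix.trace_transpose (Sigᵀ * M), Matrix.transpose_mul, Matrix.transpose_transpose]
  have lhsx : trace ((B - X)ᵀ * (B - X)) =
      trace (Bᵀ * B) - trace (Bᵀ * X) - trace (Xᵀ * B) + trace (Xᵀ * X) := by
    simp only [Matrix.transpose_sub, Matrix.sub_mul, Matrix.mul_sub, Matrix.trace_sub]
    ring
  have rhsx : trace ((Sig - M)ᵀ * (Sig - M)) =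
      trace (Sigᵀ * Sig) - trace (Sigᵀ * M) - trace (Mᵀ * Sig) + trace (Mᵀ * M) := by
    simp only [Matrix.transpose_sub, Matrix.sub_mul, Matrix.mul_sub, Matrix.trace_sub]
    ring
  rw [lhsx, rhsx, e1, e2, e3, e4]
  ring

lemma kyfan {s r : ℕ} (hrs : r < s) (H : Matrix (Fin s) (Fin s) ℝ) (hH : H.IsHermitian)
    (Y : Matrix (Fin s) (Fin r) ℝ) (hY : Yᵀ * Y = 1)
    (σ : Fin s → ℝ) (e : Equiv (Fin s) (Fin s))
    (hσ2 : ∀ i, σ i ^ 2 = hH.eigenvalues (e i))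
    (hlam_anti : Antitone (fun i => σ i ^ 2)) :
    trace (Yᵀ * H * Y) ≤
      ∑ i ∈ Finset.univ.filter (fun i : Fin s => (i : ℕ) < r), σ i ^ 2 := by
  have hVV : (Matrix.IsHermitian.eigenvectorUnitary hH : Matrix (Fin s) (Fin s) ℝ)ᵀ *
      (Matrix.IsHermitian.eigenvectorUnitary hH : Matrix (Fin s) (Fin s) ℝ) = 1 := by
    have := (Matrix.mem_unitaryGroup_iff').mp (Matrix.IsHermitian.eigenvectorUnitary hH).2
    rwa [Matrix.star_eq_conjTranspose, Matrix.conjTranspose_eq_transpose_of_trivial] at this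
  have hVV' : (Matrix.IsHermitian.eigenvectorUnitary hH : Matrix (Fin s) (Fin s) ℝ) *
      (Matrix.IsHermitian.eigenvectorUnitary hH : Matrix (Fin s) (Fin s) ℝ)ᵀ = 1 := by
    have := (Matrix.mem_unitaryGroup_iff).mp (Matrix.IsHermitian.eigenvectorUnitary hH).2
    rwa [Matrix.star_eq_conjTranspose, Matrix.conjTranspose_eq_transpose_of_trivial] at this
  set V : Matrix (Fin s) (Fin s) ℝ := (Matrix.IsHermitian.eigenvectorUnitary hH : Matrix (Fin s) (Fin s) ℝ) with hV
  set μ : Fin s → ℝ := hH.eigenvalues with hμ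
  have hspec : H = V * Matrix.diagonal μ * Vᵀ := by
    have := hH.spectral_theorem
    rwa [Unitary.conjStarAlgAut_apply, Matrix.star_eq_conjTranspose, Matrix.conjTranspose_eq_transpose_of_trivial,
      show (RCLike.ofReal ∘ hH.eigenvalues : Fin s → ℝ) = hH.eigenvalues from funext fun i => rfl]
      at this
  set W := Vᵀ * Y with hW
  set c : Fin s → ℝ := fun j => ∑ i, (W j i) ^ 2 with hc
  have h1 : trace (Yᵀ * H * Y) = ∑ j, μ j * c j := by
    have hmat : Yᵀ * H * Y = Wᵀ * (Matrix.diagonal μ * W) := by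
      rw [hspec, hW, Matrix.transpose_mul, Matrix.transpose_transpose]
      simp only [Matrix.mul_assoc]
    rw [hmat, Matrix.trace]
    have hdiag : ∀ i, (Wᵀ * (Matrix.diagonal μ * W)).diag i = ∑ j, W j i * (μ j * W j i) := by
      intro i
      simp [Matrix.diag_apply, Matrix.mul_apply, Matrix.diagonal_apply, Finset.sum_ite_eq]
    rw [Finset.sum_congr rfl fun i _ => hdiag i, Finset.sum_comm]
    refine Finset.sum_congr rfl fun j _ => ?_
    rw [hc, Finset.mul_sum]
    exact Finset.sum_congr rfl fun i _ => by ring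
  have h2 : ∑ j, c j = (r : ℝ) := by
    have hWW : Wᵀ * W = 1 := by
      rw [hW, Matrix.transpose_mul, Matrix.transpose_transpose, Matrix.mul_assoc,
        ← Matrix.mul_assoc V Vᵀ Y, hVV', Matrix.one_mul, hY]
    have hcc : ∑ j, c j = trace (W * Wᵀ) := by
      rw [Matrix.trace]
      refine Finset.sum_congr rfl fun j _ => ?_
      simp [Matrix.diag_apply, Matrix.mul_apply, hc, pow_two]
    rw [hcc, Matrix.trace_mul_comm, hWW, Matrix.trace_one]
    simp
  have h3 : ∀ j, c j ≤ 1 := by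
    intro j
    set N' := (1 : Matrix (Fin s) (Fin s) ℝ) - Y * Yᵀ with hN'
    have hNsymm : N'ᵀ = N' := by
      rw [hN', Matrix.transpose_sub, Matrix.transpose_one, Matrix.transpose_mul,
        Matrix.transpose_transpose]
    have hNN : N' * N' = N' := by
      have h4 : Y * Yᵀ * (Y * Yᵀ) = Y * Yᵀ := by
        rw [show Y * Yᵀ * (Y * Yᵀ) = Y * (Yᵀ * Y) * Yᵀ from by simp only [Matrix.mul_assoc],
          hY, Matrix.mul_one]
      rw [hN']
      simp only [Matrix.sub_mul, Matrix.mul_sub, Matrix.one_mul, Matrix.mul_one, h4]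
      abel
    have hWWd : (1 : Matrix (Fin s) (Fin s) ℝ) - W * Wᵀ = (N' * V)ᵀ * (N' * V) := by
      have expand : (N' * V)ᵀ * (N' * V) = Vᵀ * (N' * V) := by
        rw [Matrix.transpose_mul, hNsymm, Matrix.mul_assoc, ← Matrix.mul_assoc N' N' V, hNN]
      rw [expand, hN', Matrix.sub_mul, Matrix.one_mul, Matrix.mul_sub, hVV]
      congr 1
      rw [hW, Matrix.transpose_mul, Matrix.transpose_transpose]
      simp only [Matrix.mul_assoc]
    have : 0 ≤ ((N' * V)ᵀ * (N' * V)) j j := by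
      rw [Matrix.mul_apply]
      refine Finset.sum_nonneg fun a _ => ?_
      rw [Matrix.transpose_apply]
      exact mul_self_nonneg _
    have hWj : (W * Wᵀ) j j = c j := by
      simp [Matrix.mul_apply, hc, pow_two]
    have := congrArg (fun M : Matrix (Fin s) (Fin s) ℝ => M j j) hWWd
    simp only [Matrix.sub_apply, Matrix.one_apply_eq] at this
    rw [hWj] at this
    linarith [show (0:ℝ) ≤ ((N' * V)ᵀ * (N' * V)) j j from by
      rw [Matrix.mul_apply]
      exact Finset.sum_nonneg fun a _ => by rw [Matrix.transpose_apply]; exact mul_self_nonneg _]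
  have h0 : ∀ j, 0 ≤ c j := fun j => Finset.sum_nonneg fun i _ => sq_nonneg _
  rw [h1]
  have hre : ∑ j, μ j * c j = ∑ i, (σ i ^ 2) * c (e i) := by
    rw [← Equiv.sum_comp e (fun j => μ j * c j)]
    exact Finset.sum_congr rfl fun i _ => by rw [hσ2 i]
  rw [hre]
  exact sorted_sum_le hrs _ (fun i => c (e i)) hlam_anti (fun i => h0 _) (fun i => h3 _)
    (by rw [Equiv.sum_comp e c, h2])

lemma trace_compress_le {m k l : ℕ} (U : Matrix (Fin m) (Fin k) ℝ) (hU : Uᵀ * U = 1)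
    (C : Matrix (Fin m) (Fin l) ℝ) :
    trace ((Uᵀ * C)ᵀ * (Uᵀ * C)) ≤ trace (Cᵀ * C) := by
  set N := (1 : Matrix (Fin m) (Fin m) ℝ) - U * Uᵀ with hN
  have hNsymm : Nᵀ = N := by
    rw [hN, Matrix.transpose_sub, Matrix.transpose_one, Matrix.transpose_mul,
      Matrix.transpose_transpose]
  have hNN : N * N = N := by
    have h4 : U * Uᵀ * (U * Uᵀ) = U * Uᵀ := by
      rw [show U * Uᵀ * (U * Uᵀ) = U * (Uᵀ * U) * Uᵀ from by simp only [Matrix.mul_assoc],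
        hU, Matrix.mul_one]
    rw [hN]
    simp only [Matrix.sub_mul, Matrix.mul_sub, Matrix.one_mul, Matrix.mul_one, h4]
    abel
  have hkey : Cᵀ * C - (Uᵀ * C)ᵀ * (Uᵀ * C) = (N * C)ᵀ * (N * C) := by
    have expand : (N * C)ᵀ * (N * C) = Cᵀ * (N * C) := by
      rw [Matrix.transpose_mul, hNsymm, ← Matrix.mul_assoc, Matrix.mul_assoc Cᵀ N N, hNN, Matrix.mul_assoc]
    rw [expand, hN, Matrix.sub_mul, Matrix.one_mul, Matrix.mul_sub]
    congr 1
    rw [Matrix.transpose_mul, Matrix.transpose_transpose]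
    simp only [Matrix.mul_assoc]
  have := fr_nonneg (N * C)
  have h5 : trace (Cᵀ * C) - trace ((Uᵀ * C)ᵀ * (Uᵀ * C)) = trace ((N * C)ᵀ * (N * C)) := by
    rw [← Matrix.trace_sub, hkey]
  linarith

theorem EYstd {n s r : ℕ} (hrn : r ≤ n) (hrs : r < s) (B : Matrix (Fin n) (Fin s) ℝ)
    (σ : Fin s → ℝ) (hσ_anti : Antitone σ) (e : Equiv (Fin s) (Fin s))
    (hσe : ∀ i, σ i = Real.sqrt ((Matrix.isHermitian_conjTranspose_mul_self B).eigenvalues (e i))) :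
    IsLeast
      { err : ℝ | ∃ (U : Matrix (Fin n) (Fin r) ℝ) (Sig : Matrix (Fin r) (Fin r) ℝ)
          (Y : Matrix (Fin s) (Fin r) ℝ),
          Uᵀ * U = 1 ∧ Yᵀ * Y = 1 ∧
          err = Matrix.trace ((B - U * Sig * Yᵀ)ᵀ * (B - U * Sig * Yᵀ)) }
      (∑ i ∈ Finset.univ.filter (fun i : Fin s => r ≤ (i : ℕ)), σ i ^ 2) := by
  have hH := Matrix.isHermitian_conjTranspose_mul_self B
  have hHBt : Bᴴ * B = Bᵀ * B := by rw [Matrix.conjTranspose_eq_transpose_of_trivial]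
  have hμnn : ∀ i, 0 ≤ hH.eigenvalues i := fun i =>
    (Matrix.posSemidef_conjTranspose_mul_self B).eigenvalues_nonneg i
  have hσ2 : ∀ i, σ i ^ 2 = hH.eigenvalues (e i) := fun i => by
    rw [hσe i, Real.sq_sqrt (hμnn _)]
  have hσnn : ∀ i, 0 ≤ σ i := fun i => (hσe i) ▸ Real.sqrt_nonneg _
  have hlam_anti : Antitone (fun i => σ i ^ 2) := fun i j hij =>
    pow_le_pow_left₀ (hσnn j) (hσ_anti hij) 2
  -- spectral data
  have hVV : (Matrix.IsHermitian.eigenvectorUnitary hH : Matrix (Fin s) (Fin s) ℝ)ᵀ *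
      (Matrix.IsHermitian.eigenvectorUnitary hH : Matrix (Fin s) (Fin s) ℝ) = 1 := by
    have := (Matrix.mem_unitaryGroup_iff').mp (Matrix.IsHermitian.eigenvectorUnitary hH).2
    rwa [Matrix.star_eq_conjTranspose, Matrix.conjTranspose_eq_transpose_of_trivial] at this
  set V : Matrix (Fin s) (Fin s) ℝ :=
    (Matrix.IsHermitian.eigenvectorUnitary hH : Matrix (Fin s) (Fin s) ℝ) with hV
  set μ : Fin s → ℝ := hH.eigenvalues with hμ
  have hspec : Bᴴ * B = V * Matrix.diagonal μ * Vᵀ := by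
    have := hH.spectral_theorem
    rwa [Unitary.conjStarAlgAut_apply, Matrix.star_eq_conjTranspose,
      Matrix.conjTranspose_eq_transpose_of_trivial
        (Matrix.IsHermitian.eigenvectorUnitary hH : Matrix (Fin s) (Fin s) ℝ),
      show (RCLike.ofReal ∘ hH.eigenvalues : Fin s → ℝ) = hH.eigenvalues from
        funext fun i => rfl] at this
  -- total sum
  have htot : trace (Bᵀ * B) = ∑ i, σ i ^ 2 := by
    rw [← hHBt, hspec, Matrix.trace_mul_comm (V * Matrix.diagonal μ) Vᵀ,
      ← Matrix.mul_assoc, Matrix.trace_mul_comm (Vᵀ * V) (Matrix.diagonal μ),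
      hVV, Matrix.mul_one, Matrix.trace_diagonal,
      ← Equiv.sum_comp e μ]
    exact Finset.sum_congr rfl fun i _ => (hσ2 i).symm
  have hsplit : ∑ i, σ i ^ 2 =
      (∑ i ∈ Finset.univ.filter (fun i : Fin s => (i : ℕ) < r), σ i ^ 2) +
      ∑ i ∈ Finset.univ.filter (fun i : Fin s => r ≤ (i : ℕ)), σ i ^ 2 := by
    rw [← Finset.sum_filter_add_sum_filter_not Finset.univ (fun i : Fin s => (i : ℕ) < r)
      (fun i => σ i ^ 2)]
    congr 1
    refine Finset.sum_congr ?_ (fun _ _ => rfl)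
    ext x; simp [not_lt]
  constructor
  · -- membership : construct an optimal triple
    set g : Fin r → Fin s := fun i => e (Fin.castLE hrs.le i) with hg
    have ginj : Function.Injective g := fun a b hab => by
      have h := e.injective hab
      exact Fin.castLE_injective _ h
    set Y : Matrix (Fin s) (Fin r) ℝ := V.submatrix id g with hYdef
    have hYY : Yᵀ * Y = 1 := submatrix_orth V hVV g ginj
    obtain ⟨Q, hQ1, hQ2⟩ := exists_Q hrn (B * Y)
    refine ⟨Q, Qᵀ * (B * Y), Y, hQ1, hYY, ?_⟩
    rw [err_identity B Q (Qᵀ * (B * Y)) Y hQ1 hYY]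
    have hzero : Qᵀ * (B * Y) - Qᵀ * B * Y = 0 := by rw [Matrix.mul_assoc]; simp
    rw [hzero]
    have hMM : (Qᵀ * B * Y)ᵀ * (Qᵀ * B * Y) = (B * Y)ᵀ * (B * Y) := by
      calc (Qᵀ * B * Y)ᵀ * (Qᵀ * B * Y) = (B * Y)ᵀ * (Q * (Qᵀ * (B * Y))) := by
            simp only [Matrix.transpose_mul, Matrix.transpose_transpose, Matrix.mul_assoc]
        _ = (B * Y)ᵀ * (B * Y) := by rw [hQ2]
    rw [hMM]
    have hdiagY : (B * Y)ᵀ * (B * Y) = Matrix.diagonal (fun i => μ (g i)) := by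
      have hstep : (B * Y)ᵀ * (B * Y) = Yᵀ * (Bᴴ * B) * Y := by
        rw [hHBt]
        simp only [Matrix.transpose_mul, Matrix.mul_assoc]
      rw [hstep, hspec]
      have hVY : Vᵀ * Y = (1 : Matrix (Fin s) (Fin s) ℝ).submatrix id g := by
        ext j i
        have h1 : (Vᵀ * Y) j i = (Vᵀ * V) j (g i) := by
          simp [hYdef, Matrix.mul_apply]
        rw [h1, hVV]
        rfl
      have hmat : Yᵀ * (V * Matrix.diagonal μ * Vᵀ) * Y =
          (Vᵀ * Y)ᵀ * (Matrix.diagonal μ * (Vᵀ * Y)) := by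
        simp only [Matrix.transpose_mul, Matrix.transpose_transpose, Matrix.mul_assoc]
      rw [hmat, hVY]
      ext i i'
      rw [Matrix.mul_apply]
      have hterm : ∀ j, (Matrix.submatrix (1 : Matrix (Fin s) (Fin s) ℝ) id g)ᵀ i j *
          (Matrix.diagonal μ * Matrix.submatrix (1 : Matrix (Fin s) (Fin s) ℝ) id g) j i' =
          (if j = g i then 1 else 0) * (μ j * (if j = g i' then 1 else 0)) := by
        intro j
        rw [Matrix.transpose_apply, Matrix.submatrix_apply, Matrix.diagonal_mul,
          Matrix.submatrix_apply]
        simp [Matrix.one_apply]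
      rw [Finset.sum_congr rfl fun j _ => hterm j, Finset.sum_eq_single (g i)
        (fun b _ hb => by rw [if_neg hb, zero_mul])
        (fun h => absurd (Finset.mem_univ (g i)) h)]
      rw [if_pos rfl, one_mul]
      by_cases hii : i = i'
      · subst hii
        simp [Matrix.diagonal_apply_eq]
      · have hgg : g i ≠ g i' := fun hc => hii (ginj hc)
        rw [if_neg hgg, mul_zero, Matrix.diagonal_apply_ne _ hii]
    rw [hdiagY, Matrix.trace_diagonal]
    have hsum_r : ∑ i : Fin r, μ (g i) =
        ∑ j ∈ Finset.univ.filter (fun j : Fin s => (j : ℕ) < r), σ j ^ 2 := by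
      rw [show (fun i : Fin r => μ (g i)) = fun i : Fin r => σ (Fin.castLE hrs.le i) ^ 2 from
        funext fun i => by rw [hσ2]]
      refine (Finset.sum_bij' (fun (i : Fin r) (_ : i ∈ Finset.univ) => Fin.castLE hrs.le i)
        (fun (j : Fin s) (hj : j ∈ Finset.univ.filter fun j : Fin s => (j : ℕ) < r) =>
          (⟨(j : ℕ), by simpa using hj⟩ : Fin r)) ?_ ?_ ?_ ?_ ?_)
      · intro i _; simp [Fin.castLE]
      · intro j hj; simp
      · intro i _; simp [Fin.castLE]
      · intro j hj; simp [Fin.castLE]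
      · intro i _; rfl
    rw [hsum_r]
    have hz : trace ((0 : Matrix (Fin r) (Fin r) ℝ)ᵀ * (0 : Matrix (Fin r) (Fin r) ℝ)) = 0 := by
      simp
    linarith [htot, hsplit, hz]
  · -- lower bound
    rintro x ⟨U, Sig, Y, hU, hY, rfl⟩
    rw [err_identity B U Sig Y hU hY]
    have h1 : trace ((Uᵀ * B * Y)ᵀ * (Uᵀ * B * Y)) ≤ trace ((B * Y)ᵀ * (B * Y)) := by
      have h := trace_compress_le U hU (B * Y)
      rwa [show Uᵀ * (B * Y) = Uᵀ * B * Y from (Matrix.mul_assoc _ _ _).symm] at h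
    have h2 : trace ((B * Y)ᵀ * (B * Y)) ≤
        ∑ i ∈ Finset.univ.filter (fun i : Fin s => (i : ℕ) < r), σ i ^ 2 := by
      have hstep : (B * Y)ᵀ * (B * Y) = Yᵀ * (Bᴴ * B) * Y := by
        rw [hHBt]
        simp only [Matrix.transpose_mul, Matrix.mul_assoc]
      rw [hstep]
      exact kyfan hrs (Bᴴ * B) hH Y hY σ e hσ2 hlam_anti
    have h3 := fr_nonneg (Sig - Uᵀ * B * Y)
    linarith [htot, hsplit]

/-- Weighted Eckart–Young theorem: among all rank-`r` representations `U Σ Yᵀ` with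
`U` `M_x`-orthonormal and `Y` `M_ξ`-orthonormal, the minimum of the weighted Frobenius
error `‖A - U Σ Yᵀ‖² = trace((A - UΣYᵀ)ᵀ M_x (A - UΣYᵀ) M_ξ)` is attained and equals
the sum of the squared singular values of `B = L_xᵀ A L_ξ` beyond the `r`-th, where
`M_x = L_x L_xᵀ`, `M_ξ = L_ξ L_ξᵀ` are Cholesky factorizations and the singular values
`σ` of `B` (the square roots of the eigenvalues of `Bᵀ B`, in decreasing order). -/
theorem stmt19 {n s r : ℕ} (hr : r < min n s)
    (Mx Lx : Matrix (Fin n) (Fin n) ℝ) (hMx : Mx.PosDef) (hLx : Mx = Lx * Lxᵀ)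
    (Mxi Lxi : Matrix (Fin s) (Fin s) ℝ) (hMxi : Mxi.PosDef) (hLxi : Mxi = Lxi * Lxiᵀ)
    (A : Matrix (Fin n) (Fin s) ℝ)
    (σ : Fin s → ℝ) (hσ_anti : Antitone σ)
    (hσ : ∃ e : Equiv (Fin s) (Fin s), ∀ i, σ i =
      Real.sqrt ((Matrix.isHermitian_conjTranspose_mul_self (Lxᵀ * A * Lxi)).eigenvalues (e i))) :
    IsLeast
      { err : ℝ | ∃ (U : Matrix (Fin n) (Fin r) ℝ) (Sig : Matrix (Fin r) (Fin r) ℝ)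
          (Y : Matrix (Fin s) (Fin r) ℝ),
          Uᵀ * Mx * U = 1 ∧ Yᵀ * Mxi * Y = 1 ∧
          err = Matrix.trace ((A - U * Sig * Yᵀ)ᵀ * Mx * (A - U * Sig * Yᵀ) * Mxi) }
      (∑ i ∈ Finset.univ.filter (fun i : Fin s => r ≤ (i : ℕ)), σ i ^ 2) := by
  have hrn : r ≤ n := le_of_lt (lt_of_lt_of_le hr (min_le_left n s))
  have hrs : r < s := lt_of_lt_of_le hr (min_le_right n s)
  obtain ⟨e, hσe⟩ := hσ
  have hEY := EYstd hrn hrs (Lxᵀ * A * Lxi) σ hσ_anti e hσe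
  -- invertibility of the Cholesky factors
  have hdLx : IsUnit Lxᵀ.det := by
    have hd := hMx.det_pos
    rw [hLx, Matrix.det_mul, Matrix.det_transpose] at hd
    rw [Matrix.det_transpose]
    exact isUnit_iff_ne_zero.mpr (fun h => by simp [h] at hd)
  have hdLxi : IsUnit Lxiᵀ.det := by
    have hd := hMxi.det_pos
    rw [hLxi, Matrix.det_mul, Matrix.det_transpose] at hd
    rw [Matrix.det_transpose]
    exact isUnit_iff_ne_zero.mpr (fun h => by simp [h] at hd)
  have hc1 : Lxᵀ * (Lxᵀ)⁻¹ = 1 := Matrix.mul_nonsing_inv _ hdLx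
  have hc2 : Lxiᵀ * (Lxiᵀ)⁻¹ = 1 := Matrix.mul_nonsing_inv _ hdLxi
  -- transfer identities
  have key1 : ∀ U : Matrix (Fin n) (Fin r) ℝ, Uᵀ * Mx * U = (Lxᵀ * U)ᵀ * (Lxᵀ * U) := by
    intro U
    rw [hLx, Matrix.transpose_mul, Matrix.transpose_transpose]
    simp only [Matrix.mul_assoc]
  have key2 : ∀ Y : Matrix (Fin s) (Fin r) ℝ, Yᵀ * Mxi * Y = (Lxiᵀ * Y)ᵀ * (Lxiᵀ * Y) := by
    intro Y
    rw [hLxi, Matrix.transpose_mul, Matrix.transpose_transpose]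
    simp only [Matrix.mul_assoc]
  have hrep : ∀ D : Matrix (Fin n) (Fin s) ℝ,
      trace (Dᵀ * Mx * D * Mxi) = trace ((Lxᵀ * D * Lxi)ᵀ * (Lxᵀ * D * Lxi)) := by
    intro D
    rw [hLx, hLxi]
    calc trace (Dᵀ * (Lx * Lxᵀ) * D * (Lxi * Lxiᵀ))
        = trace ((Dᵀ * (Lx * (Lxᵀ * (D * Lxi)))) * Lxiᵀ) := by simp only [Matrix.mul_assoc]
      _ = trace (Lxiᵀ * (Dᵀ * (Lx * (Lxᵀ * (D * Lxi))))) := (Matrix.trace_mul_comm _ _)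
      _ = trace ((Lxᵀ * D * Lxi)ᵀ * (Lxᵀ * D * Lxi)) := by
          simp only [Matrix.transpose_mul, Matrix.transpose_transpose, Matrix.mul_assoc]
  have hlin : ∀ (U : Matrix (Fin n) (Fin r) ℝ) (Sig : Matrix (Fin r) (Fin r) ℝ)
      (Y : Matrix (Fin s) (Fin r) ℝ),
      Lxᵀ * (A - U * Sig * Yᵀ) * Lxi =
        Lxᵀ * A * Lxi - (Lxᵀ * U) * Sig * (Lxiᵀ * Y)ᵀ := by
    intro U Sig Y
    simp only [Matrix.mul_sub, Matrix.sub_mul, Matrix.transpose_mul,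
      Matrix.transpose_transpose, Matrix.mul_assoc]
  have hset : { err : ℝ | ∃ (U : Matrix (Fin n) (Fin r) ℝ) (Sig : Matrix (Fin r) (Fin r) ℝ)
          (Y : Matrix (Fin s) (Fin r) ℝ),
          Uᵀ * Mx * U = 1 ∧ Yᵀ * Mxi * Y = 1 ∧
          err = Matrix.trace ((A - U * Sig * Yᵀ)ᵀ * Mx * (A - U * Sig * Yᵀ) * Mxi) } =
      { err : ℝ | ∃ (U : Matrix (Fin n) (Fin r) ℝ) (Sig : Matrix (Fin r) (Fin r) ℝ)
          (Y : Matrix (Fin s) (Fin r) ℝ),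
          Uᵀ * U = 1 ∧ Yᵀ * Y = 1 ∧
          err = Matrix.trace (((Lxᵀ * A * Lxi) - U * Sig * Yᵀ)ᵀ *
            ((Lxᵀ * A * Lxi) - U * Sig * Yᵀ)) } := by
    ext x
    simp only [Set.mem_setOf_eq]
    constructor
    · rintro ⟨U, Sig, Y, hU, hY, rfl⟩
      refine ⟨Lxᵀ * U, Sig, Lxiᵀ * Y, by rw [← key1, hU], by rw [← key2, hY], ?_⟩
      rw [hrep, hlin]
    · rintro ⟨U, Sig, Y, hU, hY, rfl⟩
      have hLxU : Lxᵀ * ((Lxᵀ)⁻¹ * U) = U := by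
        rw [← Matrix.mul_assoc, hc1, Matrix.one_mul]
      have hLxiY : Lxiᵀ * ((Lxiᵀ)⁻¹ * Y) = Y := by
        rw [← Matrix.mul_assoc, hc2, Matrix.one_mul]
      refine ⟨(Lxᵀ)⁻¹ * U, Sig, (Lxiᵀ)⁻¹ * Y, ?_, ?_, ?_⟩
      · rw [key1, hLxU, hU]
      · rw [key2, hLxiY, hY]
      · rw [hrep, hlin, hLxU, hLxiY]
  rw [hset]
  exact hEY
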